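/- For every ε ∈ (0, π) there exists δ > 0, depending only on ε, such that |E(s, y)| = |exp(−y s) − exp(−y √(λ + s²))| ≤ 2 e^{−δ s y} for all λ ∈ Σ_ε and all real s, y ≥ 0. -/

import Mathlib

open MeasureTheory Real

/-- Principal complex square root `√z = z^(1/2)` (principal branch of `cpow`). -/
noncomputable def csqrt (z : ℂ) : ℂ := z ^ (1/2 : ℂ)

/-- The sector `Σ_ε = {λ ∈ ℂ : λ ≠ 0, |Arg λ| < π − ε}`. -/
def SigmaSector (ε : ℝ) : Set ℂ := {l : ℂ | l ≠ 0 ∧ |l.arg| < Real.pi - ε}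

/-- Mikhlin condition (M) with constant `cbar`, with `K = ⌊(d+1)/2⌋`. -/
def CondM (d : ℕ) (m : EuclideanSpace ℝ (Fin (d-1)) → ℂ) (cbar : ℝ) : Prop :=
  ContDiffOn ℝ ((d+1)/2 : ℕ) m {ξ : EuclideanSpace ℝ (Fin (d-1)) | ξ ≠ 0} ∧
  ∀ k : ℕ, k ≤ (d+1)/2 → ∀ ξ : EuclideanSpace ℝ (Fin (d-1)), ξ ≠ 0 →
    ‖ξ‖ ^ k * ‖iteratedFDerivWithin ℝ k m
        {ξ : EuclideanSpace ℝ (Fin (d-1)) | ξ ≠ 0} ξ‖ ≤ cbar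

/-- Parameterized Mikhlin condition (M*) with constants `(cbar, δ)`, `K = ⌊(d+1)/2⌋`. -/
def CondMStar (d : ℕ) (m : EuclideanSpace ℝ (Fin (d-1)) → ℝ → ℂ) (cbar δ : ℝ) : Prop :=
  (∀ y : ℝ, 0 ≤ y →
    ContDiffOn ℝ ((d+1)/2 : ℕ) (fun ξ => m ξ y)
      {ξ : EuclideanSpace ℝ (Fin (d-1)) | ξ ≠ 0}) ∧
  ∀ k : ℕ, k ≤ (d+1)/2 →
    ∀ ξ : EuclideanSpace ℝ (Fin (d-1)), ξ ≠ 0 → ∀ y : ℝ, 0 ≤ y →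
      ‖ξ‖ ^ k * ‖iteratedFDerivWithin ℝ k (fun ξ => m ξ y)
          {ξ : EuclideanSpace ℝ (Fin (d-1)) | ξ ≠ 0} ξ‖ ≤
        cbar * Real.exp (-δ * ‖ξ‖ * y) / (1 + y)

/-- The fundamental multiplier `m₀(s, y)`. -/
noncomputable def m0 (l : ℂ) (α : ℝ) (s y : ℝ) : ℂ :=
  ((csqrt (l + (s:ℂ)^2) + s) / ((α:ℂ) + l + csqrt (l + (s:ℂ)^2) + s)) *
    ((Complex.exp (-(y:ℂ) * csqrt (l + (s:ℂ)^2)) - Complex.exp (-(y:ℂ) * s)) / l)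

/-- `E(s, y) = e^{-ys} - e^{-y√(λ+s²)}`. -/
noncomputable def Efun (l : ℂ) (s y : ℝ) : ℂ :=
  Complex.exp (-(y:ℂ) * s) - Complex.exp (-(y:ℂ) * csqrt (l + (s:ℂ)^2))


lemma csqrt_sq (z : ℂ) : (csqrt z) ^ 2 = z := by
  have h : ((2:ℕ):ℂ)⁻¹ = (1/2 : ℂ) := by norm_num
  have h2 := Complex.cpow_nat_inv_pow z (two_ne_zero)
  rw [h] at h2
  simpa [csqrt] using h2

lemma re_csqrt_nonneg (z : ℂ) : 0 ≤ (csqrt z).re := by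
  rcases eq_or_ne z 0 with rfl | hz
  · simp [csqrt, Complex.zero_cpow (by norm_num : (1/2:ℂ) ≠ 0)]
  · rw [csqrt, Complex.cpow_def_of_ne_zero hz, Complex.exp_re]
    apply mul_nonneg (Real.exp_nonneg _)
    apply Real.cos_nonneg_of_mem_Icc
    have h1 := Complex.neg_pi_lt_arg z
    have h2 := Complex.arg_le_pi z
    have h3 : (Complex.log z * (1/2)).im = z.arg / 2 := by
      simp [Complex.mul_im, Complex.log_im]
      ring
    rw [h3]
    constructor
    · linarith
    · linarith

set_option maxHeartbeats 1000000 in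
lemma key (ε : ℝ) (hε0 : 0 < ε) (hεπ : ε < Real.pi) (l : ℂ) (hl : l ∈ SigmaSector ε)
    (s : ℝ) (hs : 0 ≤ s) :
    Real.sin ε / 2 * s ≤ (csqrt (l + (s:ℂ)^2)).re := by
  obtain ⟨hl0, harg⟩ := hl
  set z : ℂ := l + (s:ℂ)^2 with hzdef
  have hsre : ((s:ℂ)^2).re = s^2 := by rw [← Complex.ofReal_pow]; exact Complex.ofReal_re _
  have hsim : ((s:ℂ)^2).im = 0 := by rw [← Complex.ofReal_pow]; exact Complex.ofReal_im _
  -- z ≠ 0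
  have hz : z ≠ 0 := by
    intro h
    have h' : l.re + s^2 = 0 := by
      have := congrArg Complex.re h
      simpa [hzdef, hsre] using this
    have him : l.im = 0 := by
      have := congrArg Complex.im h
      simpa [hzdef, hsim] using this
    have h0 : l.re ≤ 0 := by nlinarith [sq_nonneg s]
    rcases h0.lt_or_eq with hlre | hlre
    · have : l.arg = Real.pi := Complex.arg_eq_pi_iff.2 ⟨hlre, him⟩
      rw [this, abs_of_pos Real.pi_pos] at harg
      linarith
    · exact hl0 (Complex.ext hlre him)
  -- real/imag parts
  have hzre : z.re = l.re + s^2 := by simp [hzdef, hsre]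
  have hzim : z.im = l.im := by simp [hzdef, hsim]
  set w : ℂ := csqrt z with hwdef
  have hw2 : w ^ 2 = z := csqrt_sq z
  have hwre : 0 ≤ w.re := re_csqrt_nonneg z
  have habsz : ‖z‖ = w.re^2 + w.im^2 := by
    rw [← hw2, norm_pow, Complex.sq_norm, Complex.normSq_apply]; ring
  have hrez : z.re = w.re^2 - w.im^2 := by
    rw [← hw2, pow_two, Complex.mul_re]; ring
  have h2a : 2 * w.re^2 = ‖z‖ + z.re := by rw [habsz, hrez]; ring
  -- arg bound: l.re ≥ -|l| cos ε
  set k : ℝ := Real.cos ε with hk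
  have hcos : Real.cos (π - ε) ≤ Real.cos l.arg := by
    rw [← Real.cos_abs l.arg]
    exact Real.cos_le_cos_of_nonneg_of_le_pi (abs_nonneg _) (by linarith) (le_of_lt harg)
  have hre_l : -(‖l‖ * k) ≤ l.re := by
    have h := Complex.norm_mul_cos_arg l
    have habsl : 0 < ‖l‖ := norm_pos_iff.mpr hl0
    rw [Real.cos_pi_sub] at hcos
    nlinarith
  have hsincos : Real.sin ε ^ 2 = 1 - k^2 := by
    have := Real.sin_sq_add_cos_sq ε; linarith
  have hk1 : k ≤ 1 := Real.cos_le_one ε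
  have hk1' : -1 ≤ k := Real.neg_one_le_cos ε
  have hA0 : 0 ≤ ‖z‖ := norm_nonneg z
  have hA2 : (‖z‖)^2 = (l.re + s^2)^2 + l.im^2 := by
    rw [Complex.sq_norm, Complex.normSq_apply, hzre, hzim]; ring
  have hr2 : (‖l‖)^2 = l.re^2 + l.im^2 := by
    rw [Complex.sq_norm, Complex.normSq_apply]; ring
  have hr0 : 0 < ‖l‖ := norm_pos_iff.mpr hl0
  -- main inequality
  have hmain : s^2 * (Real.sin ε)^2 ≤ ‖z‖ + z.re := by
    rw [hzre, hsincos]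
    rcases le_or_gt (-(l.re + s^2*k^2)) 0 with hc | hc
    · linarith
    · have hBneg : l.re + s^2 * k^2 < 0 := by linarith
      have hlre_neg : l.re < 0 := by nlinarith [sq_nonneg (s*k)]
      have hkpos : 0 < k := by nlinarith
      have hx2 : l.re^2 ≤ (‖l‖)^2 * k^2 := by nlinarith
      have him2 : l.re^2 * (1 - k^2) ≤ l.im^2 * k^2 := by nlinarith
      have hid : (l.re + s^2)^2 * k^2 + l.re^2 * (1 - k^2) - (l.re + s^2*k^2)^2 * k^2
          = (1 - k^2) * ((l.re + s^2*k^2)^2 + s^4*k^2) := by ring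
      have hpos : 0 ≤ (1 - k^2) * ((l.re + s^2*k^2)^2 + s^4*k^2) := by
        apply mul_nonneg (by nlinarith)
        positivity
      have hsq : (l.re + s^2*k^2)^2 * k^2 ≤ (‖z‖)^2 * k^2 := by
        have : (‖z‖)^2 * k^2 = (l.re + s^2)^2 * k^2 + l.im^2 * k^2 := by
          rw [hA2]; ring
        linarith
      have hsq' : (l.re + s^2*k^2)^2 ≤ (‖z‖)^2 :=
        le_of_mul_le_mul_right hsq (by positivity)
      have hfin : -(l.re + s^2*k^2) ≤ ‖z‖ := by
        have h1 : (-(l.re + s^2*k^2))^2 ≤ (‖z‖)^2 := by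
          rw [neg_pow]; simpa using hsq'
        exact le_of_pow_le_pow_left₀ two_ne_zero hA0 h1
      linarith
  -- conclude
  have h1 : (Real.sin ε / 2 * s)^2 ≤ w.re^2 := by nlinarith
  exact le_of_pow_le_pow_left₀ two_ne_zero hwre h1

/-- `|E(s,y)| ≤ 2 e^{-δ s y}` on the sector. -/
theorem stmt_7 (ε : ℝ) (hε : ε ∈ Set.Ioo 0 Real.pi) :
    ∃ δ : ℝ, 0 < δ ∧ ∀ l ∈ SigmaSector ε, ∀ s y : ℝ, 0 ≤ s → 0 ≤ y →
      ‖Efun l s y‖ ≤ 2 * Real.exp (-δ * s * y) := by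
  obtain ⟨hε0, hεπ⟩ := hε
  have hsin : 0 < Real.sin ε := Real.sin_pos_of_pos_of_lt_pi hε0 hεπ
  refine ⟨Real.sin ε / 2, by positivity, ?_⟩
  intro l hl s y hs hy
  have hkey := key ε hε0 hεπ l hl s hs
  set δ : ℝ := Real.sin ε / 2 with hδ
  have hδ1 : δ ≤ 1 := by
    have := Real.sin_le_one ε
    rw [hδ]; linarith
  have h1 : ‖Complex.exp (-(y:ℂ) * s)‖ ≤ Real.exp (-δ * s * y) := by
    rw [Complex.norm_exp]
    apply Real.exp_le_exp.2
    have : (-(y:ℂ) * s).re = -(y*s) := by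
      rw [show (-(y:ℂ) * s) = ((-(y*s) : ℝ) : ℂ) by push_cast; ring]
      exact Complex.ofReal_re _
    rw [this]
    nlinarith [mul_nonneg hs hy]
  have h2 : ‖Complex.exp (-(y:ℂ) * csqrt (l + (s:ℂ)^2))‖ ≤
      Real.exp (-δ * s * y) := by
    rw [Complex.norm_exp]
    apply Real.exp_le_exp.2
    have : (-(y:ℂ) * csqrt (l + (s:ℂ)^2)).re = -y * (csqrt (l + (s:ℂ)^2)).re := by
      simp [Complex.mul_re]
    rw [this]
    nlinarith [mul_le_mul_of_nonneg_left hkey hy]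
  calc ‖Efun l s y‖
      ≤ ‖Complex.exp (-(y:ℂ) * s)‖ +
        ‖Complex.exp (-(y:ℂ) * csqrt (l + (s:ℂ)^2))‖ := by
        rw [Efun]
        exact norm_sub_le _ _
    _ ≤ Real.exp (-δ * s * y) + Real.exp (-δ * s * y) := add_le_add h1 h2
    _ = 2 * Real.exp (-δ * s * y) := by ring
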